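/- If M(v) = exp(α + β·v − γ|v|^2) with γ > 0, and s_0 = ∫ (|v_1|/Δx) M(v) dv, s_i = ∫ v_i (|v_1|/Δx) M(v) dv for i = 1,...,d, and s_{d+1} = ∫ |v|^2 (|v_1|/Δx) M(v) dv, then s_0 > 0 and s_0 s_{d+1} > s_1^2 + ... + s_d^2. -/

import Mathlib

open MeasureTheory Real

lemma aux_abs_apply_le_norm {d : ℕ} (v : EuclideanSpace ℝ (Fin d)) (i : Fin d) :
    |v i| ≤ ‖v‖ := by
  rw [EuclideanSpace.norm_eq, show |v i| = Real.sqrt (‖v i‖ ^ 2) by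
    rw [Real.sqrt_sq_eq_abs]; simp]
  apply Real.sqrt_le_sqrt
  exact Finset.single_le_sum (f := fun j => ‖v j‖ ^ 2)
    (fun j _ => by positivity) (Finset.mem_univ i)

lemma aux_norm_sq_eq {d : ℕ} (v : EuclideanSpace ℝ (Fin d)) :
    ‖v‖ ^ 2 = ∑ i, v i ^ 2 := by
  rw [EuclideanSpace.norm_eq, Real.sq_sqrt (by positivity)]
  simp [Real.norm_eq_abs, sq_abs]

set_option maxHeartbeats 1000000 in
lemma aux_gauss_integrable {d : ℕ} {c : ℝ} (hc : 0 < c) :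
    Integrable (fun v : EuclideanSpace ℝ (Fin d) => rexp (-c * ‖v‖ ^ 2)) := by
  have h0 := (GaussianFourier.integrable_cexp_neg_mul_sq_norm_add_of_euclideanSpace
      (ι := Fin d) (b := (c : ℂ)) (by simpa using hc) 0 (0 : EuclideanSpace ℝ (Fin d)))
  have h := h0.norm
  apply h.congr
  filter_upwards with v
  rw [zero_mul, add_zero, show -(c : ℂ) * (‖v‖ : ℂ) ^ 2 = ((-c * ‖v‖ ^ 2 : ℝ) : ℂ) by
    push_cast; ring]
  rw [Complex.norm_exp, Complex.ofReal_re]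

set_option maxHeartbeats 1000000 in
lemma aux_key_integrable {d : ℕ} (k : ℕ) (α γ : ℝ) (hγ : 0 < γ)
    (β : EuclideanSpace ℝ (Fin d)) :
    Integrable (fun v : EuclideanSpace ℝ (Fin d) =>
      ‖v‖ ^ k * rexp (α + (inner ℝ β v : ℝ) - γ * ‖v‖ ^ 2)) := by
  have hint := (aux_gauss_integrable (d := d) (half_pos hγ)).const_mul
      (rexp (α + (‖β‖ + k) ^ 2 / (2 * γ)))
  apply hint.mono'
  · apply Continuous.aestronglyMeasurable
    exact (continuous_norm.pow k).mul (Real.continuous_exp.comp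
      (((continuous_const.add (continuous_const.inner continuous_id)).sub
        (continuous_const.mul (continuous_norm.pow 2)))))
  · filter_upwards with v
    rw [Real.norm_eq_abs, abs_mul, abs_pow, abs_norm, Real.abs_exp]
    have h1 : (inner ℝ β v : ℝ) ≤ ‖β‖ * ‖v‖ := real_inner_le_norm β v
    have h2 : ‖v‖ ^ k ≤ rexp ((k : ℝ) * ‖v‖) := by
      calc ‖v‖ ^ k ≤ (rexp ‖v‖) ^ k := by
            apply pow_le_pow_left₀ (norm_nonneg v)
            linarith [Real.add_one_le_exp ‖v‖]
        _ = rexp ((k : ℝ) * ‖v‖) := by rw [← Real.exp_nat_mul]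
    calc ‖v‖ ^ k * rexp (α + (inner ℝ β v : ℝ) - γ * ‖v‖ ^ 2)
        ≤ rexp ((k : ℝ) * ‖v‖) * rexp (α + ‖β‖ * ‖v‖ - γ * ‖v‖ ^ 2) := by
          apply mul_le_mul h2 (Real.exp_le_exp.2 (by linarith)) (Real.exp_pos _).le
            (Real.exp_pos _).le
      _ = rexp (α + (‖β‖ + (k : ℝ)) * ‖v‖ - (γ / 2) * ‖v‖ ^ 2)
            * rexp (-(γ / 2) * ‖v‖ ^ 2) := by
          rw [← Real.exp_add, ← Real.exp_add]; ring_nf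
      _ ≤ rexp (α + (‖β‖ + (k : ℝ)) ^ 2 / (2 * γ)) * rexp (-(γ / 2) * ‖v‖ ^ 2) := by
          apply mul_le_mul_of_nonneg_right _ (Real.exp_pos _).le
          apply Real.exp_le_exp.2
          have hle : (‖β‖ + (k : ℝ)) * ‖v‖ - (γ / 2) * ‖v‖ ^ 2
              ≤ (‖β‖ + (k : ℝ)) ^ 2 / (2 * γ) := by
            rw [le_div_iff₀ (by positivity)]
            nlinarith [sq_nonneg ((‖β‖ + (k : ℝ)) - γ * ‖v‖)]
          linarith

set_option maxHeartbeats 1000000 in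
theorem maxwellian_weighted_moments_condition
    (d : ℕ) (hd : 0 < d) (Δx : ℝ) (hΔx : 0 < Δx)
    (α : ℝ) (β : EuclideanSpace ℝ (Fin d)) (γ : ℝ) (hγ : 0 < γ)
    (M : EuclideanSpace ℝ (Fin d) → ℝ)
    (hM : ∀ v, M v = Real.exp (α + (∑ i, β i * v i) - γ * ‖v‖ ^ 2))
    (s₀ sd1 : ℝ) (s : Fin d → ℝ)
    (hs₀ : s₀ = ∫ v, (|v ⟨0, hd⟩| / Δx) * M v)
    (hs : ∀ i : Fin d, s i = ∫ v, v i * (|v ⟨0, hd⟩| / Δx) * M v)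
    (hsd1 : sd1 = ∫ v, ‖v‖ ^ 2 * (|v ⟨0, hd⟩| / Δx) * M v) :
    0 < s₀ ∧ (∑ i, s i ^ 2) < s₀ * sd1 := by
  classical
  set i0 : Fin d := ⟨0, hd⟩ with hi0
  have hM' : ∀ v : EuclideanSpace ℝ (Fin d),
      M v = rexp (α + (inner ℝ β v : ℝ) - γ * ‖v‖ ^ 2) := by
    intro v
    have hin : (inner ℝ β v : ℝ) = ∑ i, β i * v i := by
      rw [PiLp.inner_apply]; simp [RCLike.inner_apply, conj_trivial, mul_comm]
    rw [hM v, hin]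
  have hMpos : ∀ v, 0 < M v := fun v => by rw [hM' v]; exact Real.exp_pos _
  have hMcont : Continuous M := by
    rw [funext hM']
    exact Real.continuous_exp.comp
      ((continuous_const.add (continuous_const.inner continuous_id)).sub
        (continuous_const.mul (continuous_norm.pow 2)))
  set w : EuclideanSpace ℝ (Fin d) → ℝ := fun v => |v i0| / Δx * M v with hw
  have hev : Continuous fun v : EuclideanSpace ℝ (Fin d) => v i0 :=
    (EuclideanSpace.proj (𝕜 := ℝ) i0).continuous
  have hwcont : Continuous w := ((hev.abs.div_const Δx).mul hMcont)
  have hwnn : ∀ v, 0 ≤ w v := fun v => by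
    have := hMpos v
    have := abs_nonneg (v i0)
    positivity
  have hwpos : ∀ v, v i0 ≠ 0 → 0 < w v := fun v hv => by
    have := hMpos v
    have : 0 < |v i0| := abs_pos.2 hv
    positivity
  -- integrability
  have GK : ∀ k : ℕ, Integrable (fun v : EuclideanSpace ℝ (Fin d) => ‖v‖ ^ k * M v) := by
    intro k
    apply (aux_key_integrable k α γ hγ β).congr
    filter_upwards with v
    rw [hM' v]
  have hnormbd : ∀ (k : ℕ) (v : EuclideanSpace ℝ (Fin d)),
      ‖v‖ ^ k * w v ≤ (1 / Δx) * (‖v‖ ^ (k + 1) * M v) := by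
    intro k v
    have h2 : |v i0| ≤ ‖v‖ := aux_abs_apply_le_norm v i0
    have h3 := (hMpos v).le
    have h4 : (0 : ℝ) ≤ ‖v‖ ^ k := by positivity
    calc ‖v‖ ^ k * w v = ‖v‖ ^ k * (|v i0| / Δx * M v) := rfl
      _ ≤ ‖v‖ ^ k * (‖v‖ / Δx * M v) := by gcongr
      _ = (1 / Δx) * (‖v‖ ^ (k + 1) * M v) := by ring
  have I0 : Integrable w := by
    apply (((GK 1).const_mul (1 / Δx)).mono' hwcont.aestronglyMeasurable)
    filter_upwards with v
    rw [Real.norm_eq_abs, abs_of_nonneg (hwnn v)]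
    simpa using hnormbd 0 v
  have I1 : ∀ i : Fin d, Integrable fun v : EuclideanSpace ℝ (Fin d) => v i * w v := by
    intro i
    apply (((GK 2).const_mul (1 / Δx)).mono'
      (((EuclideanSpace.proj (𝕜 := ℝ) i).continuous.mul hwcont).aestronglyMeasurable))
    filter_upwards with v
    rw [Real.norm_eq_abs]; simp only [Pi.mul_apply]; rw [abs_mul, abs_of_nonneg (hwnn v)]
    calc |v i| * w v ≤ ‖v‖ * w v := by
          apply mul_le_mul_of_nonneg_right (aux_abs_apply_le_norm v i) (hwnn v)
      _ ≤ (1 / Δx) * (‖v‖ ^ 2 * M v) := by simpa using hnormbd 1 v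
  have I2 : Integrable fun v : EuclideanSpace ℝ (Fin d) => ‖v‖ ^ 2 * w v := by
    apply (((GK 3).const_mul (1 / Δx)).mono'
      (((continuous_norm.pow 2).mul hwcont).aestronglyMeasurable))
    filter_upwards with v
    rw [Real.norm_eq_abs]; simp only [Pi.mul_apply, Pi.pow_apply]; rw [abs_mul, abs_of_nonneg (hwnn v), abs_of_nonneg (by positivity :
      (0 : ℝ) ≤ ‖v‖ ^ 2)]
    simpa using hnormbd 2 v
  -- rewrite the moment definitions in terms of w
  have hs₀' : s₀ = ∫ v, w v := by rw [hs₀]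
  have hs' : ∀ i, s i = ∫ v, v i * w v := by
    intro i; rw [hs i]; simp_rw [hw, mul_assoc]
  have hsd1' : sd1 = ∫ v, ‖v‖ ^ 2 * w v := by
    rw [hsd1]; simp_rw [hw, mul_assoc]
  -- positivity of s₀
  have hs₀pos : 0 < s₀ := by
    rw [hs₀']
    rw [integral_pos_iff_support_of_nonneg hwnn I0]
    have hUopen : IsOpen {v : EuclideanSpace ℝ (Fin d) | v i0 ≠ 0} :=
      isOpen_compl_singleton.preimage hev
    have hUsub : {v : EuclideanSpace ℝ (Fin d) | v i0 ≠ 0} ⊆ Function.support w :=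
      fun v hv => (hwpos v hv).ne'
    refine lt_of_lt_of_le (hUopen.measure_pos volume ?_) (measure_mono hUsub)
    refine ⟨EuclideanSpace.single i0 1, ?_⟩
    simp [EuclideanSpace.single_apply]
  -- the barycenter point
  set t : EuclideanSpace ℝ (Fin d) :=
    (WithLp.equiv 2 (Fin d → ℝ)).symm (fun i => s i / s₀) with ht
  have hti : ∀ i, t i = s i / s₀ := fun i => rfl
  -- pointwise expansion
  have hexp : ∀ v : EuclideanSpace ℝ (Fin d), ‖v - t‖ ^ 2 * w v
      = ‖v‖ ^ 2 * w v - (∑ i, 2 * t i * (v i * w v)) + ‖t‖ ^ 2 * w v := by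
    intro v
    have hns : ‖v - t‖ ^ 2 = ‖v‖ ^ 2 - 2 * (inner ℝ v t : ℝ) + ‖t‖ ^ 2 :=
      norm_sub_sq_real v t
    have hin : (inner ℝ v t : ℝ) = ∑ i, v i * t i := by
      rw [PiLp.inner_apply]; simp [RCLike.inner_apply, conj_trivial, mul_comm]
    have hsum : (∑ i, 2 * t i * (v i * w v)) = 2 * (∑ i, v i * t i) * w v := by
      rw [Finset.mul_sum, Finset.sum_mul]
      exact Finset.sum_congr rfl fun i _ => by ring
    rw [hns, hin, hsum]
    ring
  have hIint : Integrable fun v : EuclideanSpace ℝ (Fin d) => ‖v - t‖ ^ 2 * w v := by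
    rw [show (fun v : EuclideanSpace ℝ (Fin d) => ‖v - t‖ ^ 2 * w v)
        = fun v => ‖v‖ ^ 2 * w v - (∑ i, 2 * t i * (v i * w v)) + ‖t‖ ^ 2 * w v
      from funext hexp]
    exact (I2.sub (integrable_finset_sum _ fun i _ => ((I1 i).const_mul (2 * t i)))).add
      (I0.const_mul (‖t‖ ^ 2))
  -- positivity of the variance-type integral
  have hI : 0 < ∫ v, ‖v - t‖ ^ 2 * w v := by
    rw [integral_pos_iff_support_of_nonneg
      (fun v => mul_nonneg (by positivity) (hwnn v)) hIint]
    have hUopen : IsOpen ({v : EuclideanSpace ℝ (Fin d) | v i0 ≠ 0} ∩ {t}ᶜ) :=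
      (isOpen_compl_singleton.preimage hev).inter isClosed_singleton.isOpen_compl
    have hUsub : ({v : EuclideanSpace ℝ (Fin d) | v i0 ≠ 0} ∩ {t}ᶜ)
        ⊆ Function.support fun v => ‖v - t‖ ^ 2 * w v := by
      rintro v ⟨hv1, hv2⟩
      have hvt : v ≠ t := hv2
      have h1 : 0 < ‖v - t‖ ^ 2 :=
        pow_pos (norm_pos_iff.mpr (sub_ne_zero.2 hvt)) 2
      exact (mul_pos h1 (hwpos v hv1)).ne'
    refine lt_of_lt_of_le (hUopen.measure_pos volume ?_) (measure_mono hUsub)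
    rcases eq_or_ne (EuclideanSpace.single i0 (1 : ℝ)) t with heq | hne
    · refine ⟨EuclideanSpace.single i0 (2 : ℝ), ?_, ?_⟩
      · simp [EuclideanSpace.single_apply]
      · intro hmem
        have h2 : (EuclideanSpace.single i0 (2 : ℝ)) i0 = t i0 := by
          rw [Set.mem_singleton_iff.1 hmem]
        have h1 : (EuclideanSpace.single i0 (1 : ℝ)) i0 = t i0 := by rw [heq]
        simp [EuclideanSpace.single_apply] at h1 h2
        rw [← h1] at h2
        norm_num at h2
    · exact ⟨EuclideanSpace.single i0 (1 : ℝ), by simp [EuclideanSpace.single_apply], hne⟩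
  -- compute the integral
  have hIval : (∫ v, ‖v - t‖ ^ 2 * w v)
      = sd1 - (∑ i, 2 * t i * s i) + ‖t‖ ^ 2 * s₀ := by
    have hsumInt : Integrable fun v : EuclideanSpace ℝ (Fin d) =>
        ∑ i, 2 * t i * (v i * w v) :=
      integrable_finset_sum _ fun i _ => (I1 i).const_mul (2 * t i)
    have e0 : (∫ v, ‖v - t‖ ^ 2 * w v)
        = ∫ v, (‖v‖ ^ 2 * w v - (∑ i, 2 * t i * (v i * w v)) + ‖t‖ ^ 2 * w v) :=
      integral_congr_ae (Filter.Eventually.of_forall hexp)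
    have e1 : (∫ v, (‖v‖ ^ 2 * w v - (∑ i, 2 * t i * (v i * w v)) + ‖t‖ ^ 2 * w v))
        = (∫ v, (‖v‖ ^ 2 * w v - ∑ i, 2 * t i * (v i * w v))) + ∫ v, ‖t‖ ^ 2 * w v :=
      integral_add (I2.sub hsumInt) (I0.const_mul _)
    have e2 : (∫ v, (‖v‖ ^ 2 * w v - ∑ i, 2 * t i * (v i * w v)))
        = (∫ v, ‖v‖ ^ 2 * w v) - ∫ v, ∑ i, 2 * t i * (v i * w v) :=
      integral_sub I2 hsumInt
    have e3 : (∫ v, ∑ i, 2 * t i * (v i * w v)) = ∑ i, 2 * t i * s i := by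
      rw [integral_finset_sum _ fun i _ => (I1 i).const_mul (2 * t i)]
      exact Finset.sum_congr rfl fun i _ => by rw [integral_const_mul, ← hs' i]
    have e4 : (∫ v, ‖t‖ ^ 2 * w v) = ‖t‖ ^ 2 * s₀ := by
      rw [integral_const_mul, ← hs₀']
    rw [e0, e1, e2, e3, e4, ← hsd1']
  -- final arithmetic
  refine ⟨hs₀pos, ?_⟩
  set S : ℝ := ∑ i, s i ^ 2 with hS
  have hSnn : 0 ≤ S := Finset.sum_nonneg fun i _ => sq_nonneg _
  have h1 : (∑ i, 2 * t i * s i) = 2 * S / s₀ := by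
    rw [hS, Finset.mul_sum, Finset.sum_div]
    refine Finset.sum_congr rfl fun i _ => ?_
    rw [hti i]
    field_simp
  have h2 : ‖t‖ ^ 2 = S / s₀ ^ 2 := by
    rw [aux_norm_sq_eq, hS, Finset.sum_div]
    refine Finset.sum_congr rfl fun i _ => ?_
    rw [hti i, div_pow]
  rw [hIval, h1, h2] at hI
  have hs₀ne : s₀ ≠ 0 := hs₀pos.ne'
  have key : S / s₀ < sd1 := by
    have : S / s₀ ^ 2 * s₀ = S / s₀ := by field_simp
    rw [this] at hI
    have h5 : 2 * S / s₀ = 2 * (S / s₀) := by ring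
    rw [h5] at hI
    linarith
  calc S = s₀ * (S / s₀) := by field_simp
    _ < s₀ * sd1 := by exact mul_lt_mul_of_pos_left key hs₀pos
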